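/- Let G be a finite connected simple graph on vertex set V, let B ⊆ V and I = V ∖ B both be nonempty, suppose the subgraph of G induced on I is connected and every vertex of B has at least one neighbor in I. Let ω be a stress that is strictly positive on every edge of G having at least one endpoint in I, and let x : V → ℝ be such that every vertex i ∈ I is in equilibrium, i.e., Σ_{j : {i,j} ∈ E} ω_{ij}(x_i − x_j) = 0. If min_{b ∈ B} x_b < max_{b ∈ B} x_b, then for every i ∈ I, min_{b ∈ B} x_b < x_i < max_{b ∈ B} x_b. -/

import Mathlib

open BigOperators

lemma smp_aux
    {V : Type*} [Fintype V] [DecidableEq V]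
    (G : SimpleGraph V) [DecidableRel G.Adj]
    (B : Finset V) (hB : B.Nonempty)
    (hIconn : (G.induce {v : V | v ∉ B}).Connected)
    (hBnbr : ∀ b ∈ B, ∃ v, v ∉ B ∧ G.Adj b v)
    (w : V → V → ℝ)
    (hpos : ∀ i j, G.Adj i j → (i ∉ B ∨ j ∉ B) → 0 < w i j)
    (x : V → ℝ)
    (heq : ∀ i, i ∉ B → ∑ j ∈ G.neighborFinset i, w i j * (x i - x j) = 0)
    (hlt : B.inf' hB x < B.sup' hB x) :
    ∀ i, i ∉ B → x i < B.sup' hB x := by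
  have hVne : (Finset.univ : Finset V).Nonempty := ⟨hB.choose, Finset.mem_univ _⟩
  set M := Finset.univ.sup' hVne x with hM
  have hle : ∀ v, x v ≤ M := fun v => Finset.le_sup' x (Finset.mem_univ v)
  -- step: interior vertex at the global max forces all neighbors to the global max
  have step : ∀ i, i ∉ B → x i = M → ∀ j, G.Adj i j → x j = M := by
    intro i hi hMi j hj
    have hterm : ∀ k ∈ G.neighborFinset i, 0 ≤ w i k * (x i - x k) := by
      intro k hk
      have hadj : G.Adj i k := (SimpleGraph.mem_neighborFinset G i k).1 hk
      have hw := hpos i k hadj (Or.inl hi)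
      have hx : 0 ≤ x i - x k := by rw [hMi]; linarith [hle k]
      exact mul_nonneg hw.le hx
    have h0 := (Finset.sum_eq_zero_iff_of_nonneg hterm).1 (heq i hi) j
      ((SimpleGraph.mem_neighborFinset G i j).2 hj)
    have hw := hpos i j hj (Or.inl hi)
    have hx : x i - x j = 0 := by
      rcases mul_eq_zero.1 h0 with h | h
      · exact absurd h hw.ne'
      · exact h
    linarith [hMi, hx]
  -- propagate along walks in the induced interior graph
  have walkprop : ∀ (a b : {v : V | v ∉ B}),
      (G.induce {v : V | v ∉ B}).Walk a b → x ↑a = M → x ↑b = M := by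
    intro a b p
    induction p with
    | nil => exact id
    | @cons u c d h q ih =>
        intro hu
        exact ih (step ↑u u.2 hu ↑c h)
  -- if some interior vertex attains M we get a contradiction
  have allB : (∃ i, i ∉ B ∧ x i = M) → False := by
    rintro ⟨i, hi, hMi⟩
    have hall : ∀ j, j ∉ B → x j = M := by
      intro j hj
      obtain ⟨p⟩ := hIconn.preconnected ⟨i, hi⟩ ⟨j, hj⟩
      exact walkprop _ _ p hMi
    have hballM : ∀ b ∈ B, x b = M := by
      intro b hb
      obtain ⟨v, hv, hadj⟩ := hBnbr b hb
      exact step v hv (hall v hv) b hadj.symm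
    obtain ⟨b0, hb0⟩ := id hB
    have h1 : B.sup' hB x = M := by
      refine le_antisymm (Finset.sup'_le _ _ fun b hb => (hballM b hb).le) ?_
      rw [← hballM b0 hb0]; exact Finset.le_sup' x hb0
    have h2 : B.inf' hB x = M := by
      refine le_antisymm ?_ (Finset.le_inf' _ _ fun b hb => (hballM b hb).ge)
      rw [← hballM b0 hb0]; exact Finset.inf'_le x hb0
    rw [h1, h2] at hlt
    exact lt_irrefl _ hlt
  intro i hi
  by_contra hcon
  push_neg at hcon
  obtain ⟨v0, hv0mem, hv0⟩ := Finset.exists_mem_eq_sup' hVne x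
  by_cases hv0B : v0 ∈ B
  · have h1 : M ≤ B.sup' hB x := by rw [hM, hv0]; exact Finset.le_sup' x hv0B
    have : x i = M := le_antisymm (hle i) (le_trans h1 hcon)
    exact allB ⟨i, hi, this⟩
  · exact allB ⟨v0, hv0B, hv0.symm⟩

theorem strict_discrete_maximum_principle
    {V : Type*} [Fintype V] [DecidableEq V]
    (G : SimpleGraph V) [DecidableRel G.Adj] (hconn : G.Connected)
    (B : Finset V) (hB : B.Nonempty) (hI : ∃ v, v ∉ B)
    (hIconn : (G.induce {v : V | v ∉ B}).Connected)
    (hBnbr : ∀ b ∈ B, ∃ v, v ∉ B ∧ G.Adj b v)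
    (w : V → V → ℝ) (hsym : ∀ i j, w i j = w j i)
    (hpos : ∀ i j, G.Adj i j → (i ∉ B ∨ j ∉ B) → 0 < w i j)
    (x : V → ℝ)
    (heq : ∀ i, i ∉ B → ∑ j ∈ G.neighborFinset i, w i j * (x i - x j) = 0)
    (hlt : B.inf' hB x < B.sup' hB x) :
    ∀ i, i ∉ B → B.inf' hB x < x i ∧ x i < B.sup' hB x := by
  intro i hi
  have hupper := smp_aux G B hB hIconn hBnbr w hpos x heq hlt i hi
  -- lower bound via negation
  have heqn : ∀ i, i ∉ B →
      ∑ j ∈ G.neighborFinset i, w i j * ((fun v => -x v) i - (fun v => -x v) j) = 0 := by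
    intro i hi
    have h : ∑ j ∈ G.neighborFinset i, w i j * (-x i - -x j)
        = -∑ j ∈ G.neighborFinset i, w i j * (x i - x j) := by
      rw [← Finset.sum_neg_distrib]
      exact Finset.sum_congr rfl fun j _ => by ring
    simpa [h, heq i hi] using h.trans (by rw [heq i hi, neg_zero])
  have hsupneg : B.sup' hB (fun v => -x v) = - B.inf' hB x := by
    apply le_antisymm
    · exact Finset.sup'_le _ _ fun b hb => neg_le_neg (Finset.inf'_le x hb)
    · obtain ⟨b, hb, hbe⟩ := Finset.exists_mem_eq_inf' hB x
      rw [hbe]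
      exact Finset.le_sup' (fun v => -x v) hb
  have hinfneg : B.inf' hB (fun v => -x v) = - B.sup' hB x := by
    apply le_antisymm
    · obtain ⟨b, hb, hbe⟩ := Finset.exists_mem_eq_sup' hB x
      rw [hbe]
      exact Finset.inf'_le (fun v => -x v) hb
    · exact Finset.le_inf' _ _ fun b hb => neg_le_neg (Finset.le_sup' x hb)
  have hltn : B.inf' hB (fun v => -x v) < B.sup' hB (fun v => -x v) := by
    rw [hsupneg, hinfneg]; linarith
  have hlower := smp_aux G B hB hIconn hBnbr w hpos (fun v => -x v) heqn hltn i hi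
  rw [hsupneg] at hlower
  exact ⟨by linarith, hupper⟩
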